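/- Let G be a finite graph, S ∈ Δ(G), and C a connected component of G−S with N(C) = S' a proper subset of S. Then mfi_F(R(S,C)) = mfi_F(R(S',C)) for any fill weight F on G. -/

import Mathlib

open scoped NNReal

namespace PMCPP

variable {V : Type} {X : Type}

/-- A graph is chordal if every cycle on four or more vertices has a chord:
for every injective cyclic sequence of `n ≥ 4` vertices with consecutive
vertices adjacent, some pair of non-consecutive vertices of the cycle is adjacent. -/
def IsChordal (G : SimpleGraph V) : Prop :=
  ∀ n : ℕ, 4 ≤ n → ∀ f : ZMod n → V, Function.Injective f →
    (∀ i, G.Adj (f i) (f (i + 1))) →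
    ∃ i j : ZMod n, j ≠ i + 1 ∧ i ≠ j + 1 ∧ G.Adj (f i) (f j)

/-- `H` is a triangulation of `G`: a chordal supergraph on the same vertex set. -/
def IsTriangulation (G H : SimpleGraph V) : Prop := IsChordal H ∧ G ≤ H

/-- The fill edges of a triangulation `H` of `G`. -/
def fillEdges (G H : SimpleGraph V) : Set (Sym2 V) := H.edgeSet \ G.edgeSet

/-- `H` is a minimal triangulation of `G`: no graph obtained from `G` by adding a
proper subset of the fill edges of `H` is a triangulation of `G`. -/
def IsMinimalTriangulation (G H : SimpleGraph V) : Prop :=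
  IsTriangulation G H ∧ ∀ H' : SimpleGraph V, IsTriangulation G H' → H' ≤ H → H' = H

/-- `pf G U`: the potential fill edges of `U`, i.e. pairs of distinct vertices
of `U` that are not edges of `G`. -/
def pf (G : SimpleGraph V) (U : Set V) : Set (Sym2 V) :=
  {e : Sym2 V | ¬e.IsDiag ∧ e ∉ G.edgeSet ∧ ∀ v ∈ e, v ∈ U}

/-- `F(H)`: total weight of the fill edges of the triangulation `H` of `G`
under the fill weight `F`. -/
noncomputable def fillSum (G H : SimpleGraph V) (F : Sym2 V → ℝ≥0) : ℝ≥0 :=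
  ∑ᶠ e ∈ fillEdges G H, F e

/-- `fill_F(U)`: sum of `F` over the potential fill edges of `U`. -/
noncomputable def fillF (G : SimpleGraph V) (F : Sym2 V → ℝ≥0) (U : Set V) : ℝ≥0 :=
  ∑ᶠ e ∈ pf G U, F e

/-- `mfi_F(G)`: the minimum weight of a triangulation of `G`. -/
noncomputable def mfi (G : SimpleGraph V) (F : Sym2 V → ℝ≥0) : ℝ≥0 :=
  sInf {x : ℝ≥0 | ∃ H : SimpleGraph V, IsTriangulation G H ∧ x = fillSum G H F}

/-- `H` is an `F`-minimum triangulation of `G`. -/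
def IsFMinTriangulation (G H : SimpleGraph V) (F : Sym2 V → ℝ≥0) : Prop :=
  IsTriangulation G H ∧ ∀ H' : SimpleGraph V, IsTriangulation G H' →
    fillSum G H F ≤ fillSum G H' F

/-- `H` is an `F`-minimum minimal triangulation of `G`. -/
def IsFMinMinimalTriangulation (G H : SimpleGraph V) (F : Sym2 V → ℝ≥0) : Prop :=
  IsFMinTriangulation G H F ∧ IsMinimalTriangulation G H

/-- There is a walk from `x` to `y` in `G` avoiding `S`. -/
def AvoidReach (G : SimpleGraph V) (S : Set V) (x y : V) : Prop :=
  ∃ p : G.Walk x y, ∀ v ∈ p.support, v ∉ S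

/-- `S` is an `xy`-separator of `G`. -/
def IsSeparator (G : SimpleGraph V) (S : Set V) (x y : V) : Prop :=
  x ∉ S ∧ y ∉ S ∧ G.Reachable x y ∧ ¬AvoidReach G S x y

/-- `S` is a minimal separator of `G`: a minimal `xy`-separator for some `x`, `y`. -/
def IsMinSeparator (G : SimpleGraph V) (S : Set V) : Prop :=
  ∃ x y : V, IsSeparator G S x y ∧ ∀ S' ⊂ S, ¬IsSeparator G S' x y

/-- `Δ(G)`: the set of minimal separators of `G`. -/
def minSeps (G : SimpleGraph V) : Set (Set V) := {S | IsMinSeparator G S}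

/-- `C` is a connected component of `G − S`: a maximal `S`-avoiding-connected
set of vertices disjoint from `S`. -/
def IsCompOf (G : SimpleGraph V) (S C : Set V) : Prop :=
  C.Nonempty ∧ Disjoint C S ∧ (∀ x ∈ C, ∀ y ∈ C, AvoidReach G S x y) ∧
    ∀ C' : Set V, C ⊆ C' → Disjoint C' S →
      (∀ x ∈ C', ∀ y ∈ C', AvoidReach G S x y) → C' = C

/-- `S'` is parallel to `S`: `S'` meets at most one connected component of `G − S`. -/
def Parallel (G : SimpleGraph V) (S S' : Set V) : Prop :=
  {C : Set V | IsCompOf G S C ∧ (C ∩ S').Nonempty}.Subsingleton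

/-- `Φ` is a maximal pairwise-parallel set of minimal separators of `G`. -/
def MaxPairwiseParallel (G : SimpleGraph V) (Φ : Set (Set V)) : Prop :=
  Φ ⊆ minSeps G ∧ Φ.Pairwise (Parallel G) ∧
    ∀ Ψ : Set (Set V), Ψ ⊆ minSeps G → Ψ.Pairwise (Parallel G) → Φ ⊆ Ψ → Ψ = Φ

/-- `G_Φ`: the graph obtained from `G` by saturating every separator in `Φ`. -/
def saturate (G : SimpleGraph V) (Φ : Set (Set V)) : SimpleGraph V where
  Adj u v := u ≠ v ∧ (G.Adj u v ∨ ∃ S ∈ Φ, u ∈ S ∧ v ∈ S)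
  symm := by
    refine ⟨?_⟩
    rintro u v ⟨h0, h⟩
    refine ⟨h0.symm, ?_⟩
    rcases h with h | ⟨S, hS, hu, hv⟩
    · exact Or.inl h.symm
    · exact Or.inr ⟨S, hS, hv, hu⟩
  loopless := ⟨fun u h => h.1 rfl⟩

/-- `N(C)`: the vertices outside `C` having a neighbor in `C`. -/
def neighborsOf (G : SimpleGraph V) (C : Set V) : Set V :=
  {v | v ∉ C ∧ ∃ u ∈ C, G.Adj u v}

/-- `(S, C)` is a block of `G`. -/
def IsBlock (G : SimpleGraph V) (S C : Set V) : Prop :=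
  S ∈ minSeps G ∧ IsCompOf G S C

/-- `(S, C)` is a full block of `G`: `N(C) = S`. -/
def IsFullBlock (G : SimpleGraph V) (S C : Set V) : Prop :=
  IsBlock G S C ∧ neighborsOf G C = S

/-- The realization `R(S,C)`: the graph on the vertices `S ∪ C` (realized here as
a graph on `V` all of whose edges lie inside `S ∪ C`) whose edges are the edges of
`G` inside `S ∪ C` together with all pairs of distinct vertices of `S`. -/
def realization (G : SimpleGraph V) (S C : Set V) : SimpleGraph V where
  Adj u v := u ≠ v ∧ u ∈ S ∪ C ∧ v ∈ S ∪ C ∧ (G.Adj u v ∨ (u ∈ S ∧ v ∈ S))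
  symm := by
    refine ⟨?_⟩
    rintro u v ⟨h0, h1, h2, h3⟩
    refine ⟨h0.symm, h2, h1, ?_⟩
    rcases h3 with h | ⟨ha, hb⟩
    · exact Or.inl h.symm
    · exact Or.inr ⟨hb, ha⟩
  loopless := ⟨fun u h => h.1 rfl⟩

/-- `K` is a maximal clique of `H`. -/
def IsMaximalClique (H : SimpleGraph V) (K : Set V) : Prop :=
  H.IsClique K ∧ ∀ K' : Set V, H.IsClique K' → K ⊆ K' → K' = K

/-- `K` is a potential maximal clique of `G`: a maximal clique of some
minimal triangulation of `G`. -/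
def IsPMC (G : SimpleGraph V) (K : Set V) : Prop :=
  ∃ H : SimpleGraph V, IsMinimalTriangulation G H ∧ IsMaximalClique H K

/-- The graph obtained from `G` by adding the set of edges `E'`. -/
def addEdges (G : SimpleGraph V) (E' : Set (Sym2 V)) : SimpleGraph V :=
  G ⊔ SimpleGraph.fromEdgeSet E'

/-- A character on `X`: a partition of a subset of `X`, i.e. a collection of
nonempty pairwise disjoint subsets (cells) of `X`. -/
def IsCharacter (χ : Set (Set X)) : Prop :=
  (∀ A ∈ χ, A.Nonempty) ∧ χ.PairwiseDisjoint id

/-- Vertices of the partition intersection graph of `C`: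
pairs `(A, χ)` with `χ ∈ C` and `A` a cell of `χ`. -/
def PigV (C : Set (Set (Set X))) : Type _ :=
  {p : Set X × Set (Set X) // p.2 ∈ C ∧ p.1 ∈ p.2}

/-- The partition intersection graph `pig C`: `(A, χ)` and `(A', χ')` are adjacent
iff they are distinct and `A ∩ A' ≠ ∅`. -/
def pig (C : Set (Set (Set X))) : SimpleGraph (PigV C) where
  Adj p q := p ≠ q ∧ (p.val.1 ∩ q.val.1).Nonempty
  symm := by
    refine ⟨?_⟩
    rintro p q ⟨h0, h⟩
    exact ⟨h0.symm, by rwa [Set.inter_comm]⟩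
  loopless := ⟨fun p h => h.1 rfl⟩

/-- A triangulation `H` of `pig C` is proper if no fill edge joins a
monochromatic pair (two vertices with the same character). -/
def IsProper (C : Set (Set (Set X))) (H : SimpleGraph (PigV C)) : Prop :=
  ∀ p q : PigV C, H.Adj p q → ¬(pig C).Adj p q → p.val.2 ≠ q.val.2

/-- The displayed characters of a triangulation `H` of `pig C`: the characters
of `C` broken by no fill edge of `H`. -/
def displayedChars (C : Set (Set (Set X))) (H : SimpleGraph (PigV C)) :
    Set (Set (Set X)) :=
  {χ | χ ∈ C ∧ ∀ p q : PigV C, H.Adj p q → ¬(pig C).Adj p q →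
      ¬(p.val.2 = χ ∧ q.val.2 = χ)}

open Classical in
/-- The fill weight `F_w` on `pig C` induced by a character weight `w`:
`w χ` on monochromatic pairs with shared character `χ`, and `0` otherwise. -/
noncomputable def wWeight (C : Set (Set (Set X))) (w : Set (Set X) → ℝ≥0) :
    Sym2 (PigV C) → ℝ≥0 :=
  Sym2.lift ⟨fun p q => if p.val.2 = q.val.2 then w p.val.2 else 0, by
    intro p q
    dsimp only
    by_cases h : p.val.2 = q.val.2
    · rw [if_pos h, if_pos h.symm, h]
    · rw [if_neg h, if_neg (fun h' => h h'.symm)]⟩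

/-- The indicator fill weight `F_C` on `pig C`:
`1` on monochromatic pairs and `0` otherwise. -/
noncomputable def indWeight (C : Set (Set (Set X))) : Sym2 (PigV C) → ℝ≥0 :=
  wWeight C fun _ => 1

/-- `w(C')`: total weight of a set of characters. -/
noncomputable def wsum (w : Set (Set X) → ℝ≥0) (C' : Set (Set (Set X))) : ℝ≥0 :=
  ∑ᶠ χ ∈ C', w χ

/-- An `X`-tree: a finite tree `T` together with `φ : X → V(T)` such that every
node of degree at most two is in the image of `φ`. -/
structure XTree (X : Type) where
  V : Type
  finV : Finite V
  T : SimpleGraph V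
  isTree : T.IsTree
  φ : X → V
  lowDegreeLabeled : ∀ v : V, (T.neighborSet v).ncard ≤ 2 → v ∈ Set.range φ

/-- The vertex set of the minimal subtree of `T` connecting `φ(A)`:
the union of the (unique) paths between labels of elements of `A`. -/
def subtreeVerts {W : Type} (T : SimpleGraph W) (φ : X → W) (A : Set X) : Set W :=
  {v | ∃ a ∈ A, ∃ b ∈ A, ∃ p : T.Path (φ a) (φ b), v ∈ p.val.support}

/-- `(T, φ)` displays the character `χ`: for distinct cells `A`, `A'` of `χ` the
subtrees `T(A)` and `T(A')` share no node. -/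
def DisplaysIn {W : Type} (T : SimpleGraph W) (φ : X → W) (χ : Set (Set X)) : Prop :=
  ∀ A ∈ χ, ∀ A' ∈ χ, A ≠ A' → subtreeVerts T φ A ∩ subtreeVerts T φ A' = ∅

/-- The `X`-tree `t` displays the character `χ`. -/
def Displays (t : XTree X) (χ : Set (Set X)) : Prop := DisplaysIn t.T t.φ χ

/-- `t` is a perfect phylogeny for `C`: it displays every character of `C`. -/
def IsPerfectPhylogeny (C : Set (Set (Set X))) (t : XTree X) : Prop :=
  ∀ χ ∈ C, Displays t χ

/-- `C` is compatible: some `X`-tree displays every character in `C`. -/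
def Compatible (C : Set (Set (Set X))) : Prop := ∃ t : XTree X, IsPerfectPhylogeny C t

/-- Isomorphism of `X`-trees: a graph isomorphism carrying one labeling to the other. -/
def XTreeIso (t t' : XTree X) : Prop :=
  ∃ ψ : t.T ≃g t'.T, ∀ x : X, ψ (t.φ x) = t'.φ x

/-- `t` is ternary: every internal node (degree at least two) has degree three. -/
def Ternary (t : XTree X) : Prop :=
  ∀ v : t.V, 2 ≤ (t.T.neighborSet v).ncard → (t.T.neighborSet v).ncard = 3

/-- The graph obtained from `T` by contracting the edge `uv` (merging `v` into `u`). -/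
def contractGraph {W : Type} (T : SimpleGraph W) (u v : W) :
    SimpleGraph {x : W // x ≠ v} where
  Adj a b := a ≠ b ∧
    (T.Adj a.val b.val ∨ (a.val = u ∧ T.Adj v b.val) ∨ (b.val = u ∧ T.Adj a.val v))
  symm := by
    refine ⟨?_⟩
    rintro a b ⟨h0, h⟩
    refine ⟨h0.symm, ?_⟩
    rcases h with h | ⟨h1, h2⟩ | ⟨h1, h2⟩
    · exact Or.inl h.symm
    · exact Or.inr (Or.inr ⟨h1, h2.symm⟩)
    · exact Or.inr (Or.inl ⟨h1, h2.symm⟩)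
  loopless := ⟨fun a h => h.1 rfl⟩

open Classical in
/-- The labeling map after contracting the edge `uv` (merging `v` into `u`). -/
noncomputable def contractMap {W : Type} (φ : X → W) (u v : W) (huv : u ≠ v) :
    X → {x : W // x ≠ v} :=
  fun x => if h : φ x = v then ⟨u, huv⟩ else ⟨φ x, h⟩

/-- The edge `uv` of the `X`-tree `t` is distinguished by `χ`: contracting `uv`
results in an `X`-tree that does not display `χ`. -/
def EdgeDistinguishedBy (t : XTree X) (u v : t.V) (h : t.T.Adj u v)
    (χ : Set (Set X)) : Prop :=
  ¬DisplaysIn (contractGraph t.T u v) (contractMap t.φ u v h.ne) χ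

/-- `t` is distinguished by `C`: each edge of `t` is distinguished by some
character of `C`. -/
def DistinguishedBy (C : Set (Set (Set X))) (t : XTree X) : Prop :=
  ∀ u v : t.V, ∀ h : t.T.Adj u v, ∃ χ ∈ C, EdgeDistinguishedBy t u v h χ

/-- `Δ_min^F(G)`: the minimal separators of `G` that are minimal separators of
some `F`-minimum minimal triangulation of `G`. -/
def minFillSeps (G : SimpleGraph V) (F : Sym2 V → ℝ≥0) : Set (Set V) :=
  {S | ∃ H : SimpleGraph V, IsFMinMinimalTriangulation G H F ∧ S ∈ minSeps H}

private def cliqueOn (S : Set V) : SimpleGraph V where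
  Adj u v := u ≠ v ∧ u ∈ S ∧ v ∈ S
  symm := by refine ⟨?_⟩; rintro u v ⟨h, hu, hv⟩; exact ⟨h.symm, hv, hu⟩
  loopless := ⟨fun u h => h.1 rfl⟩

private def restrict (H : SimpleGraph V) (U : Set V) : SimpleGraph V where
  Adj u v := H.Adj u v ∧ u ∈ U ∧ v ∈ U
  symm := by refine ⟨?_⟩; rintro u v ⟨h, hu, hv⟩; exact ⟨h.symm, hv, hu⟩
  loopless := ⟨fun u h => h.1.ne rfl⟩

private lemma natCast_ne {n a b : ℕ} (h4 : 4 ≤ n) (ha : a < n) (hb : b < n) (hab : a ≠ b) :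
    (a : ZMod n) ≠ (b : ZMod n) := by
  haveI : NeZero n := ⟨by omega⟩
  intro h
  apply hab
  have := congrArg ZMod.val h
  rwa [ZMod.val_natCast_of_lt ha, ZMod.val_natCast_of_lt hb] at this

private lemma chord02 {n : ℕ} (h4 : 4 ≤ n) :
    ((2:ℕ):ZMod n) ≠ ((0:ℕ):ZMod n) + 1 ∧ ((0:ℕ):ZMod n) ≠ ((2:ℕ):ZMod n) + 1 ∧
      ((0:ℕ):ZMod n) ≠ ((2:ℕ):ZMod n) := by
  have e1 : ((0:ℕ):ZMod n) + 1 = ((1:ℕ):ZMod n) := by push_cast; ring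
  have e3 : ((2:ℕ):ZMod n) + 1 = ((3:ℕ):ZMod n) := by push_cast; ring
  refine ⟨?_, ?_, ?_⟩
  · rw [e1]; exact natCast_ne h4 (by omega) (by omega) (by omega)
  · rw [e3]; exact natCast_ne h4 (by omega) (by omega) (by omega)
  · exact natCast_ne h4 (by omega) (by omega) (by omega)

private lemma chordal_top : IsChordal (⊤ : SimpleGraph V) := by
  intro n hn f hf hadj
  obtain ⟨h1, h2, h3⟩ := chord02 (n := n) hn
  exact ⟨((0:ℕ):ZMod n), ((2:ℕ):ZMod n), h1, h2, hf.ne h3⟩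

private lemma chordal_cliqueOn (S : Set V) : IsChordal (cliqueOn S) := by
  intro n hn f hf hadj
  obtain ⟨h1, h2, h3⟩ := chord02 (n := n) hn
  exact ⟨((0:ℕ):ZMod n), ((2:ℕ):ZMod n), h1, h2, hf.ne h3,
    (hadj _).2.1, (hadj _).2.1⟩

private lemma chordal_restrict (H : SimpleGraph V) (U : Set V) (h : IsChordal H) :
    IsChordal (restrict H U) := by
  intro n hn f hf hadj
  obtain ⟨i, j, h1, h2, h3⟩ := h n hn f hf (fun i => (hadj i).1)
  exact ⟨i, j, h1, h2, h3, (hadj i).2.1, (hadj j).2.1⟩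

private lemma exists_crossing {n : ℕ} (f : ZMod n → V) (P : Set V)
    {a b : ℕ} (hab : a ≤ b) (ha : f ↑a ∈ P) (hb : f ↑b ∉ P) :
    ∃ k, a ≤ k ∧ k < b ∧ f ↑k ∈ P ∧ f ↑(k+1) ∉ P := by
  by_contra hcon
  push_neg at hcon
  apply hb
  have key : ∀ c, a ≤ c → c ≤ b → f ↑c ∈ P := by
    intro c
    induction c with
    | zero =>
      intro h1 _
      have h0 : a = 0 := by omega
      subst h0; exact ha
    | succ c ih =>
      intro h1 h2
      rcases Nat.lt_or_ge a (c+1) with h | h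
      · exact hcon c (by omega) (by omega) (ih (by omega) (by omega))
      · have h0 : a = c + 1 := by omega
        subst h0; exact ha
  exact key b hab le_rfl

private lemma chordal_sup (A B : SimpleGraph V) (P Q : Set V)
    (hA : ∀ u v, A.Adj u v → u ∈ P ∧ v ∈ P)
    (hB : ∀ u v, B.Adj u v → u ∈ Q ∧ v ∈ Q)
    (hAQ : ∀ u v, A.Adj u v → u ∈ Q → v ∈ Q → B.Adj u v)
    (hBP : ∀ u v, B.Adj u v → u ∈ P → v ∈ P → A.Adj u v)
    (hK : ∀ u v, u ∈ P → u ∈ Q → v ∈ P → v ∈ Q → u ≠ v → A.Adj u v)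
    (hcA : IsChordal A) (hcB : IsChordal B) : IsChordal (A ⊔ B) := by
  intro n hn f hf hadj
  haveI : NeZero n := ⟨by omega⟩
  by_cases hp : ∃ p, f p ∉ Q
  · by_cases hq : ∃ q, f q ∉ P
    · -- mixed case
      obtain ⟨p, hp⟩ := hp
      obtain ⟨q, hq⟩ := hq
      set g : ZMod n → V := fun i => f (i + p) with hg
      have hginj : Function.Injective g := hf.comp (add_left_injective p)
      have hgadj : ∀ i, (A ⊔ B).Adj (g i) (g (i + 1)) := by
        intro i
        have h := hadj (i + p)
        simp only [hg]
        rwa [show i + 1 + p = i + p + 1 by ring]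
      have hmemPQ : ∀ i, g i ∈ P ∨ g i ∈ Q := by
        intro i
        rcases hgadj i with h | h
        · exact Or.inl (hA _ _ h).1
        · exact Or.inr (hB _ _ h).1
      have hg0Q : g 0 ∉ Q := by simpa [hg] using hp
      have hg0P : g 0 ∈ P := (hmemPQ 0).resolve_right hg0Q
      set m' : ZMod n := q - p with hm'
      have hgm'P : g m' ∉ P := by
        have : m' + p = q := by simp [hm']
        simpa [hg, this] using hq
      have hgm'Q : g m' ∈ Q := (hmemPQ m').resolve_left hgm'P
      have hm'0 : m' ≠ 0 := by
        intro h; rw [h] at hgm'P; exact hgm'P hg0P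
      set m : ℕ := m'.val with hm
      have hmlt : m < n := ZMod.val_lt m'
      have hmcast : (↑m : ZMod n) = m' := ZMod.natCast_rightInverse m'
      have hm0 : 0 < m := by
        rcases Nat.eq_zero_or_pos m with h | h
        · exfalso; apply hm'0; rw [← hmcast, h]; simp
        · exact h
      -- crossing in [0, m] leaving P
      have hcast0 : ((0:ℕ) : ZMod n) = 0 := by simp
      obtain ⟨i, hi0, him, hiP, hiP1⟩ :=
        exists_crossing g P (Nat.zero_le m) (by rwa [hcast0]) (by rwa [hmcast])
      -- crossing in [m, n] leaving Q
      have hcastn : ((n:ℕ) : ZMod n) = 0 := by simp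
      obtain ⟨j, hjm, hjn, hjQ, hjQ1⟩ :=
        exists_crossing g Q (le_of_lt hmlt) (by rwa [hmcast]) (by rw [hcastn]; exact hg0Q)
      -- f↑i ∈ Q via the edge at i
      have hcadd : ∀ k : ℕ, ((k+1 : ℕ) : ZMod n) = (↑k) + 1 := by intro k; push_cast; ring
      have hiQ : g ↑i ∈ Q := by
        rcases hgadj ↑i with h | h
        · exact absurd (by rw [hcadd]; exact (hA _ _ h).2) hiP1
        · exact (hB _ _ h).1
      have hjP : g ↑j ∈ P := by
        rcases hgadj ↑j with h | h
        · exact (hA _ _ h).1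
        · exact absurd (by rw [hcadd]; exact (hB _ _ h).2) hjQ1
      have hi0' : 0 < i := by
        rcases Nat.eq_zero_or_pos i with h | h
        · exfalso; apply hg0Q; rw [← hcast0, ← h]; exact hiQ
        · exact h
      have hjm' : m < j := by
        rcases Nat.lt_or_ge m j with h | h
        · exact h
        · exfalso
          have : m = j := by omega
          apply hgm'P; rw [← hmcast, this]; exact hjP
      -- build the chord in g, then translate
      have hij : (↑i : ZMod n) ≠ ↑j := natCast_ne hn (by omega) (by omega) (by omega)
      have hcond1 : (↑j : ZMod n) ≠ ↑i + 1 := by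
        rw [← hcadd]; exact natCast_ne hn (by omega) (by omega) (by omega)
      have hcond2 : (↑i : ZMod n) ≠ ↑j + 1 := by
        rw [← hcadd]
        rcases Nat.lt_or_ge (j+1) n with h | h
        · exact natCast_ne hn (by omega) (by omega) (by omega)
        · have : j + 1 = n := by omega
          rw [this, hcastn]
          rw [← hcast0]
          exact natCast_ne hn (by omega) (by omega) (by omega)
      have hchord : A.Adj (g ↑i) (g ↑j) := hK _ _ hiP hiQ hjP hjQ (hginj.ne hij)
      refine ⟨↑i + p, ↑j + p, ?_, ?_, Or.inl hchord⟩
      · intro h; apply hcond1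
        have : (↑j : ZMod n) + p = ↑i + 1 + p := by rw [h]; ring
        exact add_right_cancel this
      · intro h; apply hcond2
        have : (↑i : ZMod n) + p = ↑j + 1 + p := by rw [h]; ring
        exact add_right_cancel this
    · -- pure P case
      push_neg at hq
      have hadj' : ∀ i, A.Adj (f i) (f (i + 1)) := by
        intro i
        rcases hadj i with h | h
        · exact h
        · exact hBP _ _ h (hq _) (hq _)
      obtain ⟨i, j, h1, h2, h3⟩ := hcA n hn f hf hadj'
      exact ⟨i, j, h1, h2, Or.inl h3⟩
  · -- pure Q case
    push_neg at hp
    have hadj' : ∀ i, B.Adj (f i) (f (i + 1)) := by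
      intro i
      rcases hadj i with h | h
      · exact hAQ _ _ h (hp _) (hp _)
      · exact h
    obtain ⟨i, j, h1, h2, h3⟩ := hcB n hn f hf hadj'
    exact ⟨i, j, h1, h2, Or.inr h3⟩


private lemma fillSum_subset_le {V : Type} [Fintype V] (F : Sym2 V → ℝ≥0)
    {s t : Set (Sym2 V)} (h : s ⊆ t) : (∑ᶠ e ∈ s, F e) ≤ ∑ᶠ e ∈ t, F e := by
  have hs : s.Finite := Set.toFinite s
  have ht : t.Finite := Set.toFinite t
  rw [← hs.coe_toFinset, finsum_mem_coe_finset, ← ht.coe_toFinset, finsum_mem_coe_finset]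
  exact Finset.sum_le_sum_of_subset (Set.Finite.toFinset_subset_toFinset.2 h)

private lemma mfi_le_of_forall {V : Type} [Fintype V] (G1 G2 : SimpleGraph V)
    (F : Sym2 V → ℝ≥0)
    (h : ∀ H, IsTriangulation G2 H →
      ∃ H1, IsTriangulation G1 H1 ∧ fillSum G1 H1 F ≤ fillSum G2 H F) :
    mfi G1 F ≤ mfi G2 F := by
  have hne : {x : ℝ≥0 | ∃ H : SimpleGraph V, IsTriangulation G2 H ∧ x = fillSum G2 H F}.Nonempty :=
    ⟨fillSum G2 ⊤ F, ⊤, ⟨chordal_top, le_top⟩, rfl⟩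
  apply le_csInf hne
  rintro x ⟨H, hH, rfl⟩
  obtain ⟨H1, hH1, hle⟩ := h H hH
  exact le_trans (csInf_le (OrderBot.bddBelow _) ⟨H1, hH1, rfl⟩) hle

private lemma realization_mono {V : Type} (G : SimpleGraph V) {S S' C : Set V}
    (h : S' ⊆ S) : realization G S' C ≤ realization G S C := by
  rintro u v ⟨hne, hu, hv, hor⟩
  exact ⟨hne, Set.union_subset_union_left C h hu, Set.union_subset_union_left C h hv,
    hor.imp id (fun hx => ⟨h hx.1, h hx.2⟩)⟩

/-- If `S ∈ Δ(G)` and `C` is a component of `G − S` with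
`N(C) = S' ⊊ S`, then `mfi_F(R(S,C)) = mfi_F(R(S',C))` for any fill weight `F`. -/
theorem nonfull_block_mfi_eq
    {V : Type} [Fintype V] (G : SimpleGraph V) (S C S' : Set V)
    (hS : S ∈ minSeps G) (hC : IsCompOf G S C)
    (hN : neighborsOf G C = S') (hss : S' ⊂ S) (F : Sym2 V → ℝ≥0) :
    mfi (realization G S C) F = mfi (realization G S' C) F := by
  have hS'S : S' ⊆ S := hss.subset
  have hdisj : Disjoint C S := hC.2.1
  have hCS : ∀ x, x ∈ S → x ∈ S' ∪ C → x ∈ S' := by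
    intro x hxS hx
    rcases hx with h | h
    · exact h
    · exact absurd hxS (Set.disjoint_left.mp hdisj h)
  have hCN : ∀ x y, G.Adj x y → x ∈ C → y ∈ S ∪ C → y ∈ S' ∪ C := by
    intro x y hxy hx hy
    by_cases hyC : y ∈ C
    · exact Or.inr hyC
    · refine Or.inl ?_
      rw [← hN]
      exact ⟨hyC, x, hx, hxy⟩
  apply le_antisymm
  · -- mfi R(S,C) ≤ mfi R(S',C)
    apply mfi_le_of_forall
    intro H' hH'
    refine ⟨cliqueOn S ⊔ restrict H' (S' ∪ C), ⟨?_, ?_⟩, ?_⟩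
    · -- chordal
      refine chordal_sup (cliqueOn S) (restrict H' (S' ∪ C)) S (S' ∪ C)
        (fun u v h => ⟨h.2.1, h.2.2⟩) (fun u v h => ⟨h.2.1, h.2.2⟩)
        ?_ ?_ ?_ (chordal_cliqueOn S) (chordal_restrict H' _ hH'.1)
      · rintro u v ⟨hne, huS, hvS⟩ hu hv
        exact ⟨hH'.2 ⟨hne, hu, hv, Or.inr ⟨hCS u huS hu, hCS v hvS hv⟩⟩, hu, hv⟩
      · rintro u v ⟨hadj, hu, hv⟩ huS hvS
        exact ⟨hadj.ne, huS, hvS⟩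
      · intro u v huP _ hvP _ hne
        exact ⟨hne, huP, hvP⟩
    · -- R(S,C) ≤ sup
      rintro u v ⟨hne, hu, hv, hor⟩
      rcases hor with hG | ⟨huS, hvS⟩
      · rcases hu with huS | huC
        · rcases hv with hvS | hvC
          · exact Or.inl ⟨hne, huS, hvS⟩
          · -- v ∈ C : both in S' ∪ C
            have hu' : u ∈ S' ∪ C := hCN v u hG.symm hvC (Or.inl huS)
            have hv' : v ∈ S' ∪ C := Or.inr hvC
            exact Or.inr ⟨hH'.2 ⟨hne, hu', hv', Or.inl hG⟩, hu', hv'⟩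
        · have hu' : u ∈ S' ∪ C := Or.inr huC
          have hv' : v ∈ S' ∪ C := hCN u v hG huC hv
          exact Or.inr ⟨hH'.2 ⟨hne, hu', hv', Or.inl hG⟩, hu', hv'⟩
      · exact Or.inl ⟨hne, huS, hvS⟩
    · -- fillSum comparison
      apply fillSum_subset_le
      intro e
      induction e using Sym2.ind with
      | _ u v =>
        rintro ⟨h1, h2⟩
        rw [SimpleGraph.mem_edgeSet] at h1
        rcases h1 with ⟨hne, huS, hvS⟩ | ⟨hadj, hu, hv⟩
        · refine absurd ((SimpleGraph.mem_edgeSet (realization G S C)).2 ?_) h2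
          exact ⟨hne, Or.inl huS, Or.inl hvS, Or.inr ⟨huS, hvS⟩⟩
        · refine ⟨(SimpleGraph.mem_edgeSet _).2 hadj, fun hg => h2 ?_⟩
          exact (SimpleGraph.mem_edgeSet _).2
            (realization_mono G hS'S ((SimpleGraph.mem_edgeSet _).1 hg))
  · -- mfi R(S',C) ≤ mfi R(S,C)
    apply mfi_le_of_forall
    intro H hH
    refine ⟨restrict H (S' ∪ C), ⟨chordal_restrict H _ hH.1, ?_⟩, ?_⟩
    · rintro u v ⟨hne, hu, hv, hor⟩
      exact ⟨hH.2 (realization_mono G hS'S ⟨hne, hu, hv, hor⟩), hu, hv⟩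
    · apply fillSum_subset_le
      intro e
      induction e using Sym2.ind with
      | _ u v =>
        rintro ⟨h1, h2⟩
        rw [SimpleGraph.mem_edgeSet] at h1
        obtain ⟨hadj, hu, hv⟩ := h1
        refine ⟨(SimpleGraph.mem_edgeSet _).2 hadj, fun hg => h2 ?_⟩
        rw [SimpleGraph.mem_edgeSet] at hg ⊢
        obtain ⟨hne, _, _, hor⟩ := hg
        refine ⟨hne, hu, hv, ?_⟩
        rcases hor with hG | ⟨huS, hvS⟩
        · exact Or.inl hG
        · exact Or.inr ⟨hCS u huS hu, hCS v hvS hv⟩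


end PMCPP
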